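/- The number of increasing plane rooted trees of size n (n ≥ 1) equals (2n-2)! / (2^(n-1) · (n-1)!), i.e. the product of odd numbers 1·3·5···(2n-3). -/

import Mathlib

inductive PlaneTree : Type where
  | node : List PlaneTree → PlaneTree

namespace PlaneTree

mutual
  /-- number of nodes of a plane rooted tree -/
  def size : PlaneTree → ℕ
    | .node ts => 1 + sizeAux ts
  def sizeAux : List PlaneTree → ℕ
    | [] => 0
    | t :: ts => size t + sizeAux ts
end

mutual
  /-- product of the sizes of all subtrees (hook product) -/
  def hookProd : PlaneTree → ℕ
    | .node ts => size (.node ts) * hookProdAux ts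
  def hookProdAux : List PlaneTree → ℕ
    | [] => 1
    | t :: ts => hookProd t * hookProdAux ts
end

end PlaneTree

/-- plane rooted trees with labelled nodes -/
inductive LTree : Type where
  | node : ℕ → List LTree → LTree

namespace LTree

def rootLabel : LTree → ℕ
  | .node a _ => a

mutual
  /-- labels strictly increase along every root-to-leaf path -/
  def inc : LTree → Prop
    | .node a ts => incAux a ts
  def incAux : ℕ → List LTree → Prop
    | _, [] => True
    | a, t :: ts => (a < rootLabel t ∧ inc t) ∧ incAux a ts
end

mutual
  def labels : LTree → List ℕ
    | .node a ts => a :: labelsAux ts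
  def labelsAux : List LTree → List ℕ
    | [] => []
    | t :: ts => labels t ++ labelsAux ts
end

mutual
  /-- the underlying (unlabelled) plane tree -/
  def shape : LTree → PlaneTree
    | .node _ ts => .node (shapeAux ts)
  def shapeAux : List LTree → List PlaneTree
    | [] => []
    | t :: ts => shape t :: shapeAux ts
end

end LTree

/-- Increasing plane rooted trees of size `n`: increasing labelled plane trees whose
multiset of labels is exactly `{1, …, n}`. -/
def IncTreeSet (n : ℕ) : Set LTree :=
  {t | t.inc ∧ (t.labels).Perm (List.range' 1 n)}

/-- the number of increasing plane rooted trees of size `n` -/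
noncomputable def numInc (n : ℕ) : ℕ := (IncTreeSet n).ncard

/-- the number of increasing labellings of a given plane rooted tree `T` -/
noncomputable def numIncLab (T : PlaneTree) : ℕ :=
  {t : LTree | t.shape = T ∧ t.inc ∧ (t.labels).Perm (List.range' 1 T.size)}.ncard

/-- the number of plane rooted trees of size `n` -/
noncomputable def treeCount (n : ℕ) : ℕ := {T : PlaneTree | T.size = n}.ncard

namespace LTree

mutual
  /-- number of insertion slots of a tree -/
  def slots : LTree → ℕ
    | .node _ ts => slotsAux ts
  def slotsAux : List LTree → ℕ
    | [] => 1
    | t :: ts => 1 + slots t + slotsAux ts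
end

mutual
  /-- insert a new leaf labelled `m` at slot `i` -/
  def ins (m i : ℕ) : LTree → LTree
    | .node a ts => .node a (insAux m i ts)
  def insAux (m i : ℕ) : List LTree → List LTree
    | [] => [.node m []]
    | t :: ts =>
      if i = 0 then .node m [] :: t :: ts
      else if i < 1 + slots t then ins m (i - 1) t :: ts
      else t :: insAux m (i - 1 - slots t) ts
end

mutual
  /-- delete the (first) node labelled `m` (together with its subtree) -/
  def del (m : ℕ) : LTree → LTree
    | .node a ts => .node a (delAux m ts)
  def delAux (m : ℕ) : List LTree → List LTree
    | [] => []
    | t :: ts =>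
      if rootLabel t = m then ts
      else if m ∈ labels t then del m t :: ts
      else t :: delAux m ts
end

mutual
  /-- the slot index of the (first) node labelled `m` -/
  def pos (m : ℕ) : LTree → ℕ
    | .node _ ts => posAux m ts
  def posAux (m : ℕ) : List LTree → ℕ
    | [] => 0
    | t :: ts =>
      if rootLabel t = m then 0
      else if m ∈ labels t then 1 + pos m t
      else 1 + slots t + posAux m ts
end

theorem slotsAux_pos (ts : List LTree) : 1 ≤ slotsAux ts := by
  cases ts <;> simp [slotsAux] <;> omega

theorem rootLabel_mem_labels (t : LTree) : rootLabel t ∈ labels t := by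
  cases t with
  | node a ts => simp [rootLabel, labels]

mutual
  theorem slots_eq : ∀ t : LTree, slots t = 2 * (labels t).length - 1
    | .node a ts => by
      simp only [slots, labels, List.length_cons, slotsAux_eq ts]; omega
  theorem slotsAux_eq : ∀ ts : List LTree, slotsAux ts = 2 * (labelsAux ts).length + 1
    | [] => by simp [slotsAux, labelsAux]
    | t :: ts => by
      have h1 := slots_eq t
      have h2 := slotsAux_eq ts
      have h3 : 1 ≤ (labels t).length := by
        cases t with | node a cs => simp [labels]
      simp only [slotsAux, labelsAux, List.length_append]
      omega
end

theorem rootLabel_ins (m i : ℕ) (t : LTree) : rootLabel (ins m i t) = rootLabel t := by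
  cases t with | node a ts => simp [ins, rootLabel]

mutual
  theorem labels_ins : ∀ (m i : ℕ) (t : LTree),
      (labels (ins m i t)).Perm (m :: labels t)
    | m, i, .node a ts => by
      simpa [ins, labels] using
        ((labelsAux_ins m i ts).cons a).trans (List.Perm.swap m a _)
  theorem labelsAux_ins : ∀ (m i : ℕ) (ts : List LTree),
      (labelsAux (insAux m i ts)).Perm (m :: labelsAux ts)
    | m, i, [] => by simp [insAux, labelsAux, labels]
    | m, i, t :: ts => by
      by_cases h0 : i = 0
      · simp [insAux, h0, labelsAux, labels]
      · by_cases h1 : i < 1 + slots t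
        · simp only [insAux, h0, h1, if_false, if_true, labelsAux]
          exact ((labels_ins m (i - 1) t).append_right _).trans (by simp)
        · simp only [insAux, h0, h1, if_false, labelsAux]
          refine ((labelsAux_ins m _ ts).append_left _).trans ?_
          exact List.perm_middle
end

mutual
  theorem inc_ins : ∀ (m i : ℕ) (t : LTree), inc t → (∀ b ∈ labels t, b < m) →
      inc (ins m i t)
    | m, i, .node a ts => fun h hb => by
      simp only [ins, inc] at *
      exact incAux_ins m i a ts (hb a (by simp [labels])) h
        (fun b hbb => hb b (by simp [labels, hbb]))
  theorem incAux_ins : ∀ (m i a : ℕ) (ts : List LTree), a < m → incAux a ts →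
      (∀ b ∈ labelsAux ts, b < m) → incAux a (insAux m i ts)
    | m, i, a, [] => fun ham _ _ => by
      simp [insAux, incAux, rootLabel, inc, ham]
    | m, i, a, t :: ts => fun ham h hb => by
      obtain ⟨⟨h1, h2⟩, h3⟩ := h
      by_cases h0 : i = 0
      · simp only [insAux, h0, if_true]
        exact ⟨⟨by simpa [rootLabel] using ham, by simp [inc, incAux]⟩, ⟨h1, h2⟩, h3⟩
      · by_cases hlt : i < 1 + slots t
        · simp only [insAux, h0, hlt, if_false, if_true]
          refine ⟨⟨by rw [rootLabel_ins]; exact h1, ?_⟩, h3⟩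
          exact inc_ins m (i - 1) t h2 (fun b hbb => hb b (by simp [labelsAux, hbb]))
        · simp only [insAux, h0, hlt, if_false]
          refine ⟨⟨h1, h2⟩, ?_⟩
          exact incAux_ins m _ a ts ham h3 (fun b hbb => hb b (by simp [labelsAux, hbb]))
end

mutual
  theorem del_not_mem : ∀ (m : ℕ) (t : LTree), m ∉ labels t → del m t = t
    | m, .node a ts => fun h => by
      simp only [labels, List.mem_cons, not_or] at h
      simp [del, delAux_not_mem m ts h.2]
  theorem delAux_not_mem : ∀ (m : ℕ) (ts : List LTree), m ∉ labelsAux ts →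
      delAux m ts = ts
    | m, [] => fun _ => rfl
    | m, t :: ts => fun h => by
      simp only [labelsAux, List.mem_append, not_or] at h
      have hr : rootLabel t ≠ m := fun he => h.1 (he ▸ rootLabel_mem_labels t)
      simp [delAux, hr, h.1, delAux_not_mem m ts h.2]
end

mutual
  theorem del_ins : ∀ (m i : ℕ) (t : LTree), m ∉ labels t → del m (ins m i t) = t
    | m, i, .node a ts => fun h => by
      simp only [labels, List.mem_cons, not_or] at h
      simp [ins, del, delAux_ins m i ts h.2]
  theorem delAux_ins : ∀ (m i : ℕ) (ts : List LTree), m ∉ labelsAux ts →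
      delAux m (insAux m i ts) = ts
    | m, i, [] => fun _ => by simp [insAux, delAux, rootLabel]
    | m, i, t :: ts => fun h => by
      simp only [labelsAux, List.mem_append, not_or] at h
      have hr : rootLabel t ≠ m := fun he => h.1 (he ▸ rootLabel_mem_labels t)
      by_cases h0 : i = 0
      · simp [insAux, h0, delAux, rootLabel]
      · by_cases hlt : i < 1 + slots t
        · have hmem : m ∈ labels (ins m (i - 1) t) :=
            (labels_ins m (i - 1) t).mem_iff.mpr (by simp)
          have hrr : rootLabel (ins m (i - 1) t) ≠ m := by
            rw [rootLabel_ins]; exact hr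
          simp [insAux, h0, hlt, delAux, hrr, hmem, del_ins m (i - 1) t h.1]
        · simp [insAux, h0, hlt, delAux, hr, h.1, delAux_ins m _ ts h.2]
end

mutual
  theorem pos_ins : ∀ (m i : ℕ) (t : LTree), m ∉ labels t → i < slots t →
      pos m (ins m i t) = i
    | m, i, .node a ts => fun h hi => by
      simp only [labels, List.mem_cons, not_or] at h
      simp only [slots] at hi
      simp [ins, pos, posAux_ins m i ts h.2 hi]
  theorem posAux_ins : ∀ (m i : ℕ) (ts : List LTree), m ∉ labelsAux ts →
      i < slotsAux ts → posAux m (insAux m i ts) = i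
    | m, i, [] => fun _ hi => by
      simp only [slotsAux] at hi
      interval_cases i
      simp [insAux, posAux, rootLabel]
    | m, i, t :: ts => fun h hi => by
      simp only [labelsAux, List.mem_append, not_or] at h
      simp only [slotsAux] at hi
      have hr : rootLabel t ≠ m := fun he => h.1 (he ▸ rootLabel_mem_labels t)
      by_cases h0 : i = 0
      · simp [insAux, h0, posAux, rootLabel]
      · by_cases hlt : i < 1 + slots t
        · have hmem : m ∈ labels (ins m (i - 1) t) :=
            (labels_ins m (i - 1) t).mem_iff.mpr (by simp)
          have hrr : rootLabel (ins m (i - 1) t) ≠ m := by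
            rw [rootLabel_ins]; exact hr
          have := pos_ins m (i - 1) t h.1 (by omega)
          simp only [insAux, h0, hlt, if_false, if_true, posAux, hrr, hmem]
          omega
        · have := posAux_ins m (i - 1 - slots t) ts h.2 (by omega)
          simp only [insAux, h0, hlt, if_false, posAux, hr, h.1]
          omega
end

mutual
  theorem pos_lt : ∀ (m : ℕ) (t : LTree), m ∈ labels t → rootLabel t ≠ m →
      pos m t < slots (del m t)
    | m, .node a ts => fun h hr => by
      simp only [labels, List.mem_cons, rootLabel] at h hr
      have h2 : m ∈ labelsAux ts := h.resolve_left (fun he => hr he.symm)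
      simp only [pos, del, slots]
      exact posAux_lt m ts h2
  theorem posAux_lt : ∀ (m : ℕ) (ts : List LTree), m ∈ labelsAux ts →
      posAux m ts < slotsAux (delAux m ts)
    | m, [] => fun h => by simp [labelsAux] at h
    | m, t :: ts => fun h => by
      by_cases hr : rootLabel t = m
      · simp only [posAux, delAux, hr, if_true]
        exact slotsAux_pos ts
      · by_cases hm : m ∈ labels t
        · have := pos_lt m t hm hr
          have := slotsAux_pos ts
          simp only [posAux, delAux, hr, hm, if_false, if_true, slotsAux]
          omega
        · simp only [labelsAux, List.mem_append] at h
          have h2 : m ∈ labelsAux ts := h.resolve_left hm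
          have := posAux_lt m ts h2
          simp only [posAux, delAux, hr, hm, if_false, slotsAux]
          omega
end

mutual
  theorem inc_del : ∀ (m : ℕ) (t : LTree), inc t → inc (del m t)
    | m, .node a ts => fun h => by
      simp only [inc, del] at *
      exact incAux_del m a ts h
  theorem incAux_del : ∀ (m a : ℕ) (ts : List LTree), incAux a ts →
      incAux a (delAux m ts)
    | m, a, [] => fun h => h
    | m, a, t :: ts => fun h => by
      obtain ⟨⟨h1, h2⟩, h3⟩ := h
      by_cases hr : rootLabel t = m
      · simpa [delAux, hr] using h3
      · by_cases hm : m ∈ labels t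
        · have hroot : rootLabel (del m t) = rootLabel t := by
            cases t with | node c cs => simp [del, rootLabel]
          simp only [delAux, hr, hm, if_false, if_true, incAux]
          exact ⟨⟨hroot ▸ h1, inc_del m t h2⟩, h3⟩
        · simp only [delAux, hr, hm, if_false, incAux]
          exact ⟨⟨h1, h2⟩, incAux_del m a ts h3⟩
end

mutual
  theorem ins_del : ∀ (m a : ℕ) (ts : List LTree), incAux a ts →
      (∀ b ∈ labelsAux ts, b ≤ m) → m ∈ labelsAux ts →
      insAux m (posAux m ts) (delAux m ts) = ts
    | m, a, [] => fun _ _ h => by simp [labelsAux] at h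
    | m, a, t :: ts => fun hinc hb hm => by
      obtain ⟨⟨h1, h2⟩, h3⟩ := hinc
      by_cases hr : rootLabel t = m
      · -- the head is the node labelled m; it must be a leaf
        obtain ⟨c, cs⟩ := t
        simp only [rootLabel] at hr
        subst hr
        have hcs : cs = [] := by
          cases cs with
          | nil => rfl
          | cons d ds =>
            simp only [inc, incAux] at h2
            have : rootLabel d ≤ c := by
              refine hb _ ?_
              have hd := rootLabel_mem_labels d
              simp only [labelsAux, labels, List.mem_append, List.mem_cons]
              tauto
            omega
        subst hcs
        simp only [posAux, delAux, rootLabel, if_pos rfl]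
        cases ts with
        | nil => simp [insAux]
        | cons u us => simp [insAux]
      · by_cases hmt : m ∈ labels t
        · obtain ⟨c, cs⟩ := t
          simp only [rootLabel] at hr
          simp only [labels, List.mem_cons] at hmt
          have hmcs : m ∈ labelsAux cs := hmt.resolve_left (fun he => hr he.symm)
          have hbcs : ∀ b ∈ labelsAux cs, b ≤ m := fun b hbb =>
            hb b (by simp [labelsAux, labels, hbb])
          have hIH : insAux m (posAux m cs) (delAux m cs) = cs :=
            ins_del m c cs (by simpa [inc] using h2) hbcs hmcs
          have hplt : posAux m cs < slotsAux (delAux m cs) := posAux_lt m cs hmcs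
          have hmt' : m ∈ labels (LTree.node c cs) := by
            simp [labels, hmcs]
          simp only [posAux, delAux, rootLabel, hr, hmt', if_false, if_true, pos, del,
            insAux, slots]
          split_ifs with hh1 hh2
          · omega
          · simp only [Nat.add_sub_cancel_left, ins]
            rw [ins_del m c cs (by simpa [inc] using h2) hbcs hmcs]
            exact if_pos hh2
          · omega
        · simp only [labelsAux, List.mem_append] at hm
          have hmts : m ∈ labelsAux ts := hm.resolve_left hmt
          have hIH : insAux m (posAux m ts) (delAux m ts) = ts :=
            ins_del m a ts h3 (fun b hbb => hb b (by simp [labelsAux, hbb])) hmts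
          simp only [posAux, delAux, hr, hmt, if_false, insAux]
          have hsp := slotsAux_pos (delAux m ts)
          rw [if_neg (by omega), if_neg (by omega)]
          congr 1
          have heq : 1 + slots t + posAux m ts - 1 - slots t = posAux m ts := by omega
          rw [heq, hIH]
end

end LTree

open LTree

theorem labelsAux_eq_nil {ts : List LTree} (h : labelsAux ts = []) : ts = [] := by
  cases ts with
  | nil => rfl
  | cons t us => obtain ⟨a, cs⟩ := t; simp [labelsAux, labels] at h

theorem incTreeSet_one : IncTreeSet 1 = {LTree.node 1 []} := by
  ext t
  constructor
  · rintro ⟨hinc, hperm⟩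
    obtain ⟨a, ts⟩ := t
    have h1 : List.range' 1 1 = [1] := rfl
    rw [h1, List.perm_singleton] at hperm
    simp only [labels] at hperm
    have ha : a = 1 := by
      have := congrArg (fun l => l.headI) hperm; simpa using this
    have hts : labelsAux ts = [] := by
      have := congrArg (fun l => l.tail) hperm; simpa using this
    rw [ha, labelsAux_eq_nil hts]
    rfl
  · rintro rfl
    refine ⟨by simp [inc, incAux], ?_⟩
    simp [labels, labelsAux]

theorem numInc_one : numInc 1 = 1 := by
  rw [numInc, incTreeSet_one, Set.ncard_singleton]

theorem range'_perm (n : ℕ) : (List.range' 1 (n + 1)).Perm ((n + 1) :: List.range' 1 n) := by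
  rw [List.range'_concat]
  have he : 1 + 1 * n = n + 1 := by omega
  rw [he]
  simp

theorem mem_range'_le {b n : ℕ} (h : b ∈ List.range' 1 n) : 1 ≤ b ∧ b ≤ n := by
  rw [List.mem_range'] at h
  obtain ⟨i, hi, rfl⟩ := h
  omega

theorem numInc_succ (n : ℕ) (hn : 1 ≤ n) : numInc (n + 1) = (2 * n - 1) * numInc n := by
  set m := n + 1 with hm
  -- basic facts about members of `IncTreeSet (n+1)`
  have key : ∀ t ∈ IncTreeSet m, del m t ∈ IncTreeSet n ∧ pos m t < 2 * n - 1 ∧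
      ins m (pos m t) (del m t) = t := by
    rintro t ⟨hinc, hperm⟩
    obtain ⟨a, ts⟩ := t
    have hble : ∀ b ∈ labels (LTree.node a ts), b ≤ m := by
      intro b hb
      exact (mem_range'_le (hperm.mem_iff.mp hb)).2
    have hmmem : m ∈ labels (LTree.node a ts) := by
      rw [hperm.mem_iff, List.mem_range']
      exact ⟨n, by omega, by omega⟩
    have hincAux : incAux a ts := hinc
    have ham : a ≠ m := by
      rintro rfl
      have hperm' : (labelsAux ts).Perm (List.range' 1 n) := by
        have := hperm.trans (range'_perm n)
        simpa only [labels, hm] using this.cons_inv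
      have hne : ts ≠ [] := by
        rintro rfl
        have : (List.range' 1 n).length = 0 := by
          simpa [labelsAux] using hperm'.length_eq.symm
        simp at this
        omega
      obtain ⟨u, us, rfl⟩ := List.exists_cons_of_ne_nil hne
      obtain ⟨⟨hu1, _⟩, _⟩ := hincAux
      have : rootLabel u ∈ labelsAux (u :: us) := by
        simp only [labelsAux, List.mem_append]
        exact Or.inl (rootLabel_mem_labels u)
      have := (mem_range'_le (hperm'.mem_iff.mp this)).2
      omega
    have hmts : m ∈ labelsAux ts := by
      simp only [labels, List.mem_cons] at hmmem
      exact hmmem.resolve_left (fun h => ham h.symm)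
    have hbts : ∀ b ∈ labelsAux ts, b ≤ m := fun b hb =>
      hble b (by simp [labels, hb])
    have hrt : ins m (pos m (LTree.node a ts)) (del m (LTree.node a ts)) =
        LTree.node a ts := by
      simp only [pos, del, ins]
      rw [ins_del m a ts hincAux hbts hmts]
    have hlabdel : (labels (del m (LTree.node a ts))).Perm (List.range' 1 n) := by
      have h1 : (labels (ins m (pos m (LTree.node a ts))
          (del m (LTree.node a ts)))).Perm (m :: labels (del m (LTree.node a ts))) :=
        labels_ins _ _ _
      rw [hrt] at h1
      have h2 : (m :: labels (del m (LTree.node a ts))).Perm (m :: List.range' 1 n) :=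
        h1.symm.trans (hperm.trans (range'_perm n))
      exact h2.cons_inv
    have hlen : (labels (del m (LTree.node a ts))).length = n := by
      rw [hlabdel.length_eq, List.length_range']
    have hslots : slots (del m (LTree.node a ts)) = 2 * n - 1 := by
      rw [slots_eq, hlen]
    have hplt : pos m (LTree.node a ts) < 2 * n - 1 := by
      rw [← hslots]
      exact pos_lt m _ hmmem (by simpa [rootLabel] using ham)
    exact ⟨⟨inc_del m _ hinc, hlabdel⟩, hplt, hrt⟩
  have keyins : ∀ s ∈ IncTreeSet n, ∀ i : ℕ, ins m i s ∈ IncTreeSet m := by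
    rintro s ⟨hinc, hperm⟩ i
    have hblt : ∀ b ∈ labels s, b < m := by
      intro b hb
      have := (mem_range'_le (hperm.mem_iff.mp hb)).2
      omega
    refine ⟨inc_ins m i s hinc hblt, ?_⟩
    exact (labels_ins m i s).trans ((hperm.cons m).trans (range'_perm n).symm)
  have hnotmem : ∀ s ∈ IncTreeSet n, m ∉ labels s := by
    rintro s ⟨_, hperm⟩ hmem
    have := (mem_range'_le (hperm.mem_iff.mp hmem)).2
    omega
  have hslotss : ∀ s ∈ IncTreeSet n, slots s = 2 * n - 1 := by
    rintro s ⟨_, hperm⟩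
    rw [slots_eq, hperm.length_eq, List.length_range']
  let e : ↥(IncTreeSet m) ≃ ↥(IncTreeSet n) × Fin (2 * n - 1) :=
    { toFun := fun t => (⟨del m t.1, (key t.1 t.2).1⟩, ⟨pos m t.1, (key t.1 t.2).2.1⟩)
      invFun := fun p => ⟨ins m p.2.1 p.1.1, keyins p.1.1 p.1.2 p.2.1⟩
      left_inv := fun t => by
        apply Subtype.ext
        exact (key t.1 t.2).2.2
      right_inv := fun p => by
        have h1 := hnotmem p.1.1 p.1.2
        have h2 : (p.2 : ℕ) < slots p.1.1 := by
          rw [hslotss p.1.1 p.1.2]; exact p.2.2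
        refine Prod.ext (Subtype.ext ?_) ?_
        · exact del_ins m p.2.1 p.1.1 h1
        · apply Fin.ext
          simp only
          exact pos_ins m p.2.1 p.1.1 h1 h2 }
  have := Nat.card_congr e
  rw [Nat.card_prod] at this
  simp only [Nat.card_eq_fintype_card, Fintype.card_fin] at this
  rw [numInc, numInc, ← Nat.card_coe_set_eq, ← Nat.card_coe_set_eq, this]
  ring

theorem numInc_prod (k : ℕ) : numInc (k + 1) = ∏ i ∈ Finset.range k, (2 * i + 1) := by
  induction k with
  | zero => simpa using numInc_one
  | succ k ih =>
    rw [numInc_succ (k + 1) (by omega), ih, Finset.prod_range_succ]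
    have : 2 * (k + 1) - 1 = 2 * k + 1 := by omega
    rw [this]
    ring

theorem fact_prod (k : ℕ) :
    (∏ i ∈ Finset.range k, (2 * i + 1)) * (2 ^ k * Nat.factorial k) =
      Nat.factorial (2 * k) := by
  induction k with
  | zero => simp
  | succ k ih =>
    have h2 : 2 * (k + 1) = (2 * k + 1) + 1 := by ring
    have expand : (∏ i ∈ Finset.range (k + 1), (2 * i + 1)) *
        (2 ^ (k + 1) * Nat.factorial (k + 1)) =
        ((∏ i ∈ Finset.range k, (2 * i + 1)) * (2 ^ k * Nat.factorial k)) *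
          ((2 * k + 1) * (2 * (k + 1))) := by
      rw [Finset.prod_range_succ, pow_succ, Nat.factorial_succ]
      ring
    rw [expand, ih, h2, Nat.factorial_succ (2 * k + 1), Nat.factorial_succ (2 * k)]
    ring

/-- The number of increasing plane rooted trees of size `n ≥ 1` equals
`(2n-2)! / (2^(n-1) · (n-1)!)`. -/
theorem numInc_eq (n : ℕ) (hn : 1 ≤ n) :
    numInc n = Nat.factorial (2 * n - 2) / (2 ^ (n - 1) * Nat.factorial (n - 1)) := by
  obtain ⟨k, rfl⟩ : ∃ k, n = k + 1 := ⟨n - 1, by omega⟩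
  have h1 : 2 * (k + 1) - 2 = 2 * k := by omega
  have h2 : k + 1 - 1 = k := by omega
  rw [h1, h2, numInc_prod]
  symm
  exact Nat.div_eq_of_eq_mul_left (by positivity) (fact_prod k).symm
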